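/- Let d > 2 and let a, b > 0 with α = (d−1)/(d−2) > 1. Suppose f : [ρ, 1) → [0, ∞) is continuous, nondecreasing, bounded, and satisfies f(R) ≥ f(ρ) + b·∫_ρ^R f(r)^α dr for all R ∈ [ρ, 1). Then f(ρ) ≤ ((d−2)/(b(1−ρ)))^{d−2}. -/

import Mathlib

open Set intervalIntegral

/-- ODE-comparison lemma: a bounded nonnegative nondecreasing continuous
solution of `f(R) ≥ f(ρ) + b ∫_ρ^R f^α` on `[ρ,1)` with `α = (d-1)/(d-2)`
has initial value bounded by `((d-2)/(b(1-ρ)))^(d-2)`. -/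
theorem ode_comparison (d : ℕ) (hd : 2 < d) (b : ℝ) (hb : 0 < b)
    (ρ : ℝ) (hρ : ρ ∈ Set.Ico (0 : ℝ) 1)
    (f : ℝ → ℝ)
    (hcont : ContinuousOn f (Set.Ico ρ 1))
    (hmono : MonotoneOn f (Set.Ico ρ 1))
    (hnonneg : ∀ r ∈ Set.Ico ρ 1, 0 ≤ f r)
    (hbdd : ∃ M : ℝ, ∀ r ∈ Set.Ico ρ 1, f r ≤ M)
    (hineq : ∀ R ∈ Set.Ico ρ 1,
      f ρ + b * ∫ r in ρ..R, f r ^ (((d : ℝ) - 1) / ((d : ℝ) - 2)) ≤ f R) :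
    f ρ ≤ (((d : ℝ) - 2) / (b * (1 - ρ))) ^ (d - 2) := by
  obtain ⟨hρ0, hρ1⟩ := hρ
  set m : ℕ := d - 2 with hm_def
  have hm1 : 1 ≤ m := by omega
  have hmcast : ((d : ℝ) - 2) = (m : ℝ) := by
    have : (d : ℝ) = ((m : ℕ) : ℝ) + 2 := by
      push_cast; have : d = m + 2 := by omega
      rw [this]; push_cast; ring
    rw [this]; ring
  have hmr : (0 : ℝ) < m := by exact_mod_cast Nat.pos_of_ne_zero (by omega)
  set α : ℝ := ((d : ℝ) - 1) / ((d : ℝ) - 2) with hα_def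
  have hdα : (d : ℝ) - 1 = (m : ℝ) + 1 := by rw [show (d:ℝ) - 1 = ((d:ℝ) - 2) + 1 by ring, hmcast]
  have hα : α = ((m : ℝ) + 1) / (m : ℝ) := by rw [hα_def, hdα, hmcast]
  have hαpos : 0 < α := by rw [hα]; positivity
  have hα1 : α = 1 + 1 / (m : ℝ) := by rw [hα]; field_simp
  have h1ρ : (0 : ℝ) < 1 - ρ := by linarith
  -- trivial case f ρ = 0
  rcases (hnonneg ρ ⟨le_refl ρ, hρ1⟩).eq_or_lt with ha0 | ha
  · rw [← ha0, hmcast]; positivity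
  set a : ℝ := f ρ with ha_def
  set p : ℝ := -(1 : ℝ) / (m : ℝ) with hp_def
  set F : ℝ → ℝ := fun r => f r ^ α with hF_def
  set G : ℝ → ℝ := fun x => a + b * ∫ r in ρ..x, F r with hG_def
  have hFc : ContinuousOn F (Set.Ico ρ 1) :=
    hcont.rpow_const (fun x _ => Or.inr hαpos.le)
  have hFnn : ∀ r ∈ Set.Ico ρ 1, 0 ≤ F r := fun r hr =>
    Real.rpow_nonneg (hnonneg r hr) α
  -- main step: for every R ∈ [ρ, 1), b/m * (R - ρ) ≤ a ^ p
  have key : ∀ R ∈ Set.Ico ρ 1, b / m * (R - ρ) ≤ a ^ p := by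
    intro R hR
    obtain ⟨hρR, hR1⟩ := hR
    rcases hρR.eq_or_lt with rfl | hρR
    · simp [Real.rpow_natCast]
      positivity
    have hsub : Set.Icc ρ R ⊆ Set.Ico ρ 1 := fun x hx => ⟨hx.1, lt_of_le_of_lt hx.2 hR1⟩
    have hIntOn : MeasureTheory.IntegrableOn F (Set.Icc ρ R) :=
      (hFc.mono hsub).integrableOn_compact isCompact_Icc
    have hGc : ContinuousOn G (Set.Icc ρ R) := by
      apply ContinuousOn.add continuousOn_const
      apply ContinuousOn.mul continuousOn_const
      have := intervalIntegral.continuousOn_primitive_interval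
        (f := F) (a := ρ) (b := R) (μ := MeasureTheory.volume) ?_
      · rwa [Set.uIcc_of_le hρR.le] at this
      · rwa [Set.uIcc_of_le hρR.le]
    have hGlb : ∀ x ∈ Set.Icc ρ R, a ≤ G x := by
      intro x hx
      have : 0 ≤ ∫ r in ρ..x, F r := by
        apply intervalIntegral.integral_nonneg hx.1
        intro r hr
        exact hFnn r ⟨hr.1, lt_of_le_of_lt (hr.2.trans hx.2) hR1⟩
      simp only [hG_def]; nlinarith
    have hGf : ∀ x ∈ Set.Icc ρ R, G x ≤ f x := fun x hx => hineq x (hsub hx)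
    have hGpos : ∀ x ∈ Set.Icc ρ R, 0 < G x := fun x hx => lt_of_lt_of_le ha (hGlb x hx)
    -- derivative of G on the interior
    have hGderiv : ∀ x ∈ Set.Ioo ρ R, HasDerivAt G (b * F x) x := by
      intro x hx
      have hxI : x ∈ Set.Ioo ρ 1 := ⟨hx.1, lt_trans hx.2 hR1⟩
      have hInt : IntervalIntegrable F MeasureTheory.volume ρ x :=
        (hIntOn.mono_set (by rw [Set.uIcc_of_le hx.1.le]; exact Set.Icc_subset_Icc_right hx.2.le)).intervalIntegrable
      have hFcIoo : ContinuousOn F (Set.Ioo ρ 1) := hFc.mono Set.Ioo_subset_Ico_self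
      have hmeas : StronglyMeasurableAtFilter F (nhds x) MeasureTheory.volume :=
        hFcIoo.stronglyMeasurableAtFilter isOpen_Ioo x hxI
      have hcontAt : ContinuousAt F x :=
        hFcIoo.continuousAt (isOpen_Ioo.mem_nhds hxI)
      have h1 : HasDerivAt (fun u => ∫ r in ρ..u, F r) (F x) x :=
        intervalIntegral.integral_hasDerivAt_right hInt hmeas hcontAt
      simpa [hG_def] using (h1.const_mul b).const_add a
    -- ψ := G ^ p + (b/m) * x is antitone
    set ψ : ℝ → ℝ := fun x => G x ^ p + b / m * x with hψ_def
    have hψderiv : ∀ x ∈ Set.Ioo ρ R, HasDerivAt ψ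
        ((b * F x) * p * G x ^ (p - 1) + b / m) x := by
      intro x hx
      have hx' : x ∈ Set.Icc ρ R := Set.Ioo_subset_Icc_self hx
      have h1 : HasDerivAt (fun y => G y ^ p) ((b * F x) * p * G x ^ (p - 1)) x :=
        (hGderiv x hx).rpow_const (Or.inl (hGpos x hx').ne')
      simpa [hψ_def, Pi.add_def] using h1.add ((hasDerivAt_id x).const_mul (b / m))
    have hψd_nonpos : ∀ x ∈ Set.Ioo ρ R,
        (b * F x) * p * G x ^ (p - 1) + b / m ≤ 0 := by
      intro x hx
      have hx' : x ∈ Set.Icc ρ R := Set.Ioo_subset_Icc_self hx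
      have hGx : 0 < G x := hGpos x hx'
      have hfx : 0 < f x := lt_of_lt_of_le hGx (hGf x hx')
      have hGα : G x ^ α ≤ F x := by
        simpa [hF_def] using Real.rpow_le_rpow hGx.le (hGf x hx') hαpos.le
      -- G x ^ (p - 1) = G x ^ (-α)
      have hpα : p - 1 = -α := by rw [hp_def, hα1]; field_simp; ring
      have hGpow : G x ^ (p - 1) = (G x ^ α)⁻¹ := by
        rw [hpα, Real.rpow_neg hGx.le]
      have hGαpos : 0 < G x ^ α := Real.rpow_pos_of_pos hGx α
      have h1 : 1 ≤ G x ^ (p - 1) * F x := by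
        rw [hGpow, inv_mul_eq_div, one_le_div hGαpos]
        exact hGα
      have hpneg : p = -(1 / (m : ℝ)) := by rw [hp_def]; ring
      have : (b * F x) * p * G x ^ (p - 1) = -(b / m * (G x ^ (p - 1) * F x)) := by
        rw [hpneg]; ring
      rw [this]
      have h2 : b / m ≤ b / m * (G x ^ (p - 1) * F x) := by
        nlinarith [div_pos hb hmr]
      linarith
    have hψc : ContinuousOn ψ (Set.Icc ρ R) := by
      apply ContinuousOn.add
      · exact hGc.rpow_const (fun x hx => Or.inl (hGpos x hx).ne')
      · exact (continuous_const.mul continuous_id).continuousOn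
    have hψdiff : DifferentiableOn ℝ ψ (interior (Set.Icc ρ R)) := by
      rw [interior_Icc]
      exact fun x hx => ((hψderiv x hx).differentiableAt).differentiableWithinAt
    have hψanti : AntitoneOn ψ (Set.Icc ρ R) := by
      apply antitoneOn_of_deriv_nonpos (convex_Icc ρ R) hψc hψdiff
      intro x hx
      rw [interior_Icc] at hx
      rw [(hψderiv x hx).deriv]
      exact hψd_nonpos x hx
    have h3 : ψ R ≤ ψ ρ :=
      hψanti (Set.left_mem_Icc.2 hρR.le) (Set.right_mem_Icc.2 hρR.le) hρR.le
    have hGρ : G ρ = a := by simp [hG_def]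
    have hGRpos : 0 < G R ^ p :=
      Real.rpow_pos_of_pos (hGpos R (Set.right_mem_Icc.2 hρR.le)) p
    simp only [hψ_def, hGρ] at h3
    nlinarith
  -- pass to the limit R → 1⁻
  have hlim : Filter.Tendsto (fun R => b / m * (R - ρ))
      (nhdsWithin 1 (Set.Iio 1)) (nhds (b / m * (1 - ρ))) := by
    apply Filter.Tendsto.mono_left _ nhdsWithin_le_nhds
    exact (continuous_const.mul (continuous_id.sub continuous_const)).tendsto 1
  have hmain : b / m * (1 - ρ) ≤ a ^ p := by
    apply le_of_tendsto hlim
    filter_upwards [Ioo_mem_nhdsLT_of_mem (Set.mem_Ioc.2 ⟨hρ1, le_refl 1⟩)] with R hR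
    exact key R ⟨hR.1.le, hR.2⟩
  -- final algebra
  set c : ℝ := b / m * (1 - ρ) with hc_def
  have hc : 0 < c := by positivity
  have hap : 0 < a ^ p := Real.rpow_pos_of_pos ha p
  have hpow : (a ^ p) ^ m = a⁻¹ := by
    rw [← Real.rpow_natCast (a ^ p) m, ← Real.rpow_mul ha.le]
    rw [hp_def]
    rw [show -1 / (m : ℝ) * m = -1 by field_simp]
    rw [Real.rpow_neg_one]
  have h4 : c ^ m ≤ a⁻¹ := by
    rw [← hpow]
    exact pow_le_pow_left₀ hc.le hmain m
  have h5 : a ≤ (c ^ m)⁻¹ := by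
    rw [← inv_inv a]
    exact inv_anti₀ (pow_pos hc m) h4
  have h6 : (c ^ m)⁻¹ = (((d : ℝ) - 2) / (b * (1 - ρ))) ^ m := by
    rw [← inv_pow, hmcast, hc_def]
    congr 1
    field_simp
  rw [← h6]
  exact h5
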